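/- Let z ∈ ℂ satisfy Im(z) ≠ 0 and |z| ≠ 1. Then there exists a constant C_z > 0, depending only on z, such that for every n ≥ 1 and every Hermitian n×n complex matrix M, the 2n×2n matrix [[M, −I],[I, 0]] − z·I is invertible and ‖([[M, −I],[I, 0]] − z·I)^{−1}‖ ≤ C_z; equivalently, every singular value of [[M, −I],[I, 0]] − z·I is at least 1/C_z. -/

import Mathlib

open Matrix

noncomputable section

/-- The ℓ²→ℓ² operator norm of a matrix. -/
def opNorm {m : Type*} [Fintype m] [DecidableEq m] {K : Type*} [RCLike K]
    (M : Matrix m m K) : ℝ :=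
  ‖(Matrix.toEuclideanLin M).toContinuousLinearMap‖


-- symmetric operator resolvent bound
lemma herm_key {n : ℕ} {M : Matrix (Fin n) (Fin n) ℂ} (hM : M.IsHermitian) (w : ℂ)
    (u : EuclideanSpace ℂ (Fin n)) :
    |w.im| * ‖u‖ ≤ ‖Matrix.toEuclideanLin M u - w • u‖ := by
  have hsym := Matrix.isHermitian_iff_isSymmetric.mp hM
  set T := Matrix.toEuclideanLin M with hT
  have him : (inner ℂ u (T u) : ℂ).im = 0 := by
    have h1 : (starRingEnd ℂ) (inner ℂ u (T u) : ℂ) = inner ℂ u (T u) := by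
      rw [inner_conj_symm]
      exact (hsym u u)
    exact Complex.conj_eq_iff_im.mp h1
  have hnn : (0:ℝ) ≤ ‖u‖ := norm_nonneg u
  have hinner : (inner ℂ u (T u - w • u) : ℂ) = inner ℂ u (T u) - w * (‖u‖:ℂ)^2 := by
    rw [inner_sub_right, inner_smul_right, inner_self_eq_norm_sq_to_K]
    norm_cast
  have him2 : |(inner ℂ u (T u - w • u) : ℂ).im| = |w.im| * ‖u‖^2 := by
    rw [hinner]
    simp only [Complex.sub_im, him, Complex.mul_im]
    have : ((‖u‖:ℂ)^2).re = ‖u‖^2 := by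
      norm_cast
    have h2 : ((‖u‖:ℂ)^2).im = 0 := by norm_cast
    rw [this, h2]
    rw [zero_sub, abs_neg]
    simp [abs_mul, abs_of_nonneg (sq_nonneg ‖u‖)]
  have hcs : |(inner ℂ u (T u - w • u) : ℂ).im| ≤ ‖u‖ * ‖T u - w • u‖ := by
    calc |(inner ℂ u (T u - w • u) : ℂ).im| ≤ ‖(inner ℂ u (T u - w • u) : ℂ)‖ :=
          Complex.abs_im_le_norm _
      _ = ‖(inner ℂ u (T u - w • u) : ℂ)‖ := rfl
      _ ≤ ‖u‖ * ‖T u - w • u‖ := norm_inner_le_norm _ _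
  rw [him2] at hcs
  rcases eq_or_lt_of_le hnn with h | h
  · rw [← h]; simp
  · have := (mul_le_mul_iff_left₀ h).mp (by nlinarith : (|w.im| * ‖u‖) * ‖u‖ ≤ (‖T u - w • u‖) * ‖u‖)
    exact this


lemma sqrt_add_le (A B : ℝ) (hA : 0 ≤ A) (hB : 0 ≤ B) :
    Real.sqrt (A + B) ≤ Real.sqrt A + Real.sqrt B := by
  rw [show A + B = A + B from rfl]
  have h : A + B ≤ (Real.sqrt A + Real.sqrt B)^2 := by
    have := Real.sq_sqrt hA
    have := Real.sq_sqrt hB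
    nlinarith [Real.sqrt_nonneg A, Real.sqrt_nonneg B]
  calc Real.sqrt (A + B) ≤ Real.sqrt ((Real.sqrt A + Real.sqrt B)^2) := Real.sqrt_le_sqrt h
    _ = Real.sqrt A + Real.sqrt B := Real.sqrt_sq (by positivity)

lemma norm_split {n : ℕ} (x : EuclideanSpace ℂ (Fin n ⊕ Fin n)) :
    ‖x‖ ≤ ‖((WithLp.equiv 2 (Fin n → ℂ)).symm fun i => x (Sum.inl i))‖
        + ‖((WithLp.equiv 2 (Fin n → ℂ)).symm fun i => x (Sum.inr i))‖ := by
  rw [EuclideanSpace.norm_eq, EuclideanSpace.norm_eq, EuclideanSpace.norm_eq]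
  rw [Fintype.sum_sum_type]
  exact sqrt_add_le _ _ (by positivity) (by positivity)

lemma norm_inl_le {n : ℕ} (x : EuclideanSpace ℂ (Fin n ⊕ Fin n)) :
    ‖((WithLp.equiv 2 (Fin n → ℂ)).symm fun i => x (Sum.inl i))‖ ≤ ‖x‖ := by
  rw [EuclideanSpace.norm_eq, EuclideanSpace.norm_eq, Fintype.sum_sum_type]
  exact Real.sqrt_le_sqrt (le_add_of_nonneg_right (by positivity))

lemma norm_inr_le {n : ℕ} (x : EuclideanSpace ℂ (Fin n ⊕ Fin n)) :
    ‖((WithLp.equiv 2 (Fin n → ℂ)).symm fun i => x (Sum.inr i))‖ ≤ ‖x‖ := by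
  rw [EuclideanSpace.norm_eq, EuclideanSpace.norm_eq, Fintype.sum_sum_type]
  exact Real.sqrt_le_sqrt (le_add_of_nonneg_left (by positivity))

lemma key_bound (z : ℂ) (hz : z ≠ 0) (hw : (z + z⁻¹).im ≠ 0) {n : ℕ}
    {M : Matrix (Fin n) (Fin n) ℂ} (hM : M.IsHermitian)
    (x : EuclideanSpace ℂ (Fin n ⊕ Fin n)) :
    ‖x‖ ≤ ((1 + ‖z‖⁻¹)^2 * |(z + z⁻¹).im|⁻¹ + ‖z‖⁻¹ + 1) *
      ‖Matrix.toEuclideanLin (Matrix.fromBlocks M (-1) 1 0 -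
        z • (1 : Matrix (Fin n ⊕ Fin n) (Fin n ⊕ Fin n) ℂ)) x‖ := by
  set w : ℂ := z + z⁻¹ with hwdef
  set s : ℝ := ‖z‖ with hsdef
  set t : ℝ := |w.im| with htdef
  have hs : 0 < s := by simpa [hsdef] using (norm_pos_iff.mpr hz)
  have ht : 0 < t := abs_pos.mpr hw
  set A : Matrix (Fin n ⊕ Fin n) (Fin n ⊕ Fin n) ℂ :=
    Matrix.fromBlocks M (-1) 1 0 - z • 1 with hAdef
  set y : EuclideanSpace ℂ (Fin n ⊕ Fin n) := Matrix.toEuclideanLin A x with hydef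
  set u : Fin n → ℂ := fun i => x (Sum.inl i) with hudef
  set v : Fin n → ℂ := fun i => x (Sum.inr i) with hvdef
  set a : Fin n → ℂ := fun i => y (Sum.inl i) with hadef
  set b : Fin n → ℂ := fun i => y (Sum.inr i) with hbdef
  -- mulVec computation
  have hxel : (WithLp.equiv 2 (Fin n ⊕ Fin n → ℂ)) x = Sum.elim u v := by
    funext i; cases i <;> rfl
  have hy : (WithLp.equiv 2 (Fin n ⊕ Fin n → ℂ)) y = A *ᵥ Sum.elim u v := by
    show A *ᵥ (WithLp.equiv 2 (Fin n ⊕ Fin n → ℂ) x) = A *ᵥ Sum.elim u v; rw [hxel]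
  have hAmul : A *ᵥ Sum.elim u v = Sum.elim (M *ᵥ u - v - z • u) (u - z • v) := by
    rw [hAdef, Matrix.sub_mulVec, Matrix.smul_mulVec, Matrix.one_mulVec,
      Matrix.fromBlocks_mulVec]
    funext i
    cases i with
    | inl i => simp [Matrix.neg_mulVec, Matrix.one_mulVec, sub_eq_add_neg, mul_comm]
    | inr i => simp [Matrix.one_mulVec, Matrix.zero_mulVec, sub_eq_add_neg]
  have ha : a = M *ᵥ u - v - z • u := by
    funext i
    have := congrFun (hy.trans hAmul) (Sum.inl i)
    exact this
  have hb : b = u - z • v := by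
    funext i
    have := congrFun (hy.trans hAmul) (Sum.inr i)
    exact this
  -- algebraic identities
  have hMu : M *ᵥ u - w • u = a - z⁻¹ • b := by
    rw [ha, hb]
    funext i
    simp only [Pi.sub_apply, Pi.smul_apply, smul_eq_mul]
    rw [hwdef]
    field_simp
    ring
  have hveq : v = z⁻¹ • (u - b) := by
    rw [hb]
    funext i
    simp only [Pi.sub_apply, Pi.smul_apply, smul_eq_mul]
    field_simp
    ring
  -- now norms
  set ι := (WithLp.equiv 2 (Fin n → ℂ)).symm with hι
  have hherm : t * ‖ι u‖ ≤ ‖ι a‖ + s⁻¹ * ‖ι b‖ := by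
    have h1 := herm_key hM w (ι u)
    have h2 : Matrix.toEuclideanLin M (ι u) - w • (ι u) = ι (a - z⁻¹ • b) := by
      rw [← hMu]; rfl
    rw [h2, hι, WithLp.equiv_symm_apply, WithLp.toLp_sub, WithLp.toLp_smul] at h1
    calc t * ‖ι u‖ ≤ ‖ι a - z⁻¹ • ι b‖ := h1
      _ ≤ ‖ι a‖ + ‖z⁻¹ • ι b‖ := norm_sub_le _ _
      _ = ‖ι a‖ + s⁻¹ * ‖ι b‖ := by
          rw [norm_smul]
          simp [hsdef, norm_inv]
  have hvnorm : ‖ι v‖ ≤ s⁻¹ * (‖ι u‖ + ‖ι b‖) := by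
    rw [hveq, hι, WithLp.equiv_symm_apply, WithLp.toLp_smul, WithLp.toLp_sub]
    rw [norm_smul]
    have : ‖(z⁻¹ : ℂ)‖ = s⁻¹ := by simp [hsdef, norm_inv]
    rw [this]
    have := norm_sub_le ((WithLp.equiv 2 (Fin n → ℂ)).symm u) ((WithLp.equiv 2 (Fin n → ℂ)).symm b)
    have hs' : 0 ≤ s⁻¹ := by positivity
    exact mul_le_mul_of_nonneg_left this hs'
  have hxuv : ‖x‖ ≤ ‖ι u‖ + ‖ι v‖ := norm_split x
  have haN : ‖ι a‖ ≤ ‖y‖ := norm_inl_le y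
  have hbN : ‖ι b‖ ≤ ‖y‖ := norm_inr_le y
  have hN : (0:ℝ) ≤ ‖y‖ := norm_nonneg y
  have hu0 : (0:ℝ) ≤ ‖ι u‖ := norm_nonneg _
  have hv0 : (0:ℝ) ≤ ‖ι v‖ := norm_nonneg _
  have ha0 : (0:ℝ) ≤ ‖ι a‖ := norm_nonneg _
  have hb0 : (0:ℝ) ≤ ‖ι b‖ := norm_nonneg _
  have hubound : ‖ι u‖ ≤ t⁻¹ * (‖y‖ + s⁻¹ * ‖y‖) := by
    rw [le_inv_mul_iff₀ ht]
    calc t * ‖ι u‖ ≤ ‖ι a‖ + s⁻¹ * ‖ι b‖ := hherm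
      _ ≤ ‖y‖ + s⁻¹ * ‖y‖ := by
          gcongr
  have hfinal : ‖x‖ ≤ ((1 + s⁻¹)^2 * t⁻¹ + s⁻¹ + 1) * ‖y‖ := by
    have hsi : 0 ≤ s⁻¹ := by positivity
    have hti : 0 ≤ t⁻¹ := by positivity
    calc ‖x‖ ≤ ‖ι u‖ + ‖ι v‖ := hxuv
      _ ≤ ‖ι u‖ + s⁻¹ * (‖ι u‖ + ‖ι b‖) := by gcongr
      _ ≤ ‖ι u‖ + s⁻¹ * (‖ι u‖ + ‖y‖) := by gcongr
      _ = (1 + s⁻¹) * ‖ι u‖ + s⁻¹ * ‖y‖ := by ring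
      _ ≤ (1 + s⁻¹) * (t⁻¹ * (‖y‖ + s⁻¹ * ‖y‖)) + s⁻¹ * ‖y‖ := by gcongr
      _ = ((1 + s⁻¹)^2 * t⁻¹ + s⁻¹) * ‖y‖ := by ring
      _ ≤ ((1 + s⁻¹)^2 * t⁻¹ + s⁻¹ + 1) * ‖y‖ := by nlinarith
  exact hfinal


/-- for `z` with `Im z ≠ 0` and `|z| ≠ 1` there is `C_z > 0` such that
for every `n` and every Hermitian `M`, `[[M,−I],[I,0]] − zI` is invertible with inverse
of operator norm at most `C_z`. -/
theorem stmt11 (z : ℂ) (hz_im : z.im ≠ 0) (hz_abs : ‖z‖ ≠ 1) :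
    ∃ C : ℝ, 0 < C ∧ ∀ (n : ℕ) (M : Matrix (Fin n) (Fin n) ℂ), M.IsHermitian →
      IsUnit (Matrix.fromBlocks M (-1) 1 0 -
          z • (1 : Matrix (Fin n ⊕ Fin n) (Fin n ⊕ Fin n) ℂ)) ∧
      opNorm ((Matrix.fromBlocks M (-1) 1 0 -
          z • (1 : Matrix (Fin n ⊕ Fin n) (Fin n ⊕ Fin n) ℂ))⁻¹) ≤ C := by
  have hz : z ≠ 0 := fun h => hz_im (by simp [h])
  have hns : Complex.normSq z ≠ 1 := by
    intro h
    apply hz_abs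
    rw [Complex.norm_def, h, Real.sqrt_one]
  have hw : (z + z⁻¹).im ≠ 0 := by
    have h1 : (z + z⁻¹).im = z.im * (1 - (Complex.normSq z)⁻¹) := by
      rw [Complex.add_im, Complex.inv_im]
      field_simp
      ring
    rw [h1]
    refine mul_ne_zero hz_im ?_
    rw [sub_ne_zero]
    intro h2
    exact hns (inv_eq_one.mp h2.symm)
  set C : ℝ := (1 + ‖z‖⁻¹)^2 * |(z + z⁻¹).im|⁻¹ + ‖z‖⁻¹ + 1 with hCdef
  have hCpos : 0 < C := by
    have h1 : 0 < ‖z‖ := norm_pos_iff.mpr hz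
    have h2 : 0 < |(z + z⁻¹).im| := abs_pos.mpr hw
    positivity
  refine ⟨C, hCpos, fun n M hM => ?_⟩
  set A : Matrix (Fin n ⊕ Fin n) (Fin n ⊕ Fin n) ℂ :=
    Matrix.fromBlocks M (-1) 1 0 - z • 1 with hAdef
  have hker : ∀ vv : Fin n ⊕ Fin n → ℂ, A *ᵥ vv = 0 → vv = 0 := by
    intro vv hvv
    have h1 := key_bound z hz hw hM ((WithLp.equiv 2 (Fin n ⊕ Fin n → ℂ)).symm vv)
    rw [WithLp.equiv_symm_apply, Matrix.toEuclideanLin_apply_piLp_toLp] at h1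
    rw [hvv] at h1
    simp only [WithLp.toLp_zero, norm_zero, mul_zero] at h1
    have h2 : (WithLp.equiv 2 (Fin n ⊕ Fin n → ℂ)).symm vv = 0 :=
      norm_le_zero_iff.mp h1
    have := congrArg (WithLp.equiv 2 (Fin n ⊕ Fin n → ℂ)) h2
    simpa using this
  have hinj : Function.Injective A.mulVec := by
    intro p q hpq
    have h := hker (p - q) (by rw [Matrix.mulVec_sub, hpq, sub_self])
    exact sub_eq_zero.mp h
  have hA : IsUnit A := Matrix.mulVec_injective_iff_isUnit.mp hinj
  refine ⟨hA, ?_⟩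
  rw [opNorm]
  apply ContinuousLinearMap.opNorm_le_bound _ hCpos.le
  intro y
  simp only [LinearMap.coe_toContinuousLinearMap']
  have hAAinv : Matrix.toEuclideanLin A (Matrix.toEuclideanLin A⁻¹ y) = y := by
    apply (WithLp.equiv 2 (Fin n ⊕ Fin n → ℂ)).injective
    change A *ᵥ (A⁻¹ *ᵥ (WithLp.equiv 2 (Fin n ⊕ Fin n → ℂ) y)) = WithLp.equiv 2 (Fin n ⊕ Fin n → ℂ) y
    rw [Matrix.mulVec_mulVec,
      Matrix.mul_nonsing_inv A ((Matrix.isUnit_iff_isUnit_det A).mp hA), Matrix.one_mulVec]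
  calc ‖Matrix.toEuclideanLin A⁻¹ y‖
      ≤ C * ‖Matrix.toEuclideanLin A (Matrix.toEuclideanLin A⁻¹ y)‖ :=
        key_bound z hz hw hM _
    _ = C * ‖y‖ := by rw [hAAinv]

end
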